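/- arXiv:2504.19554 — 6 statements merged into one kernel-verified Lean document; each statement's English description precedes it below -/
import Mathlib

section
/- Suppose f : ℝ² × A → ℝ² is bounded by M (|f(x,a)| ≤ M for all x,a) and X : [0,T) → ℝ² is an absolutely continuous function with X(0) = x satisfying, for almost every t, Ẋ(t) = f(X(t),α(t)) − (1/ε)∇d(X(t)) where d(y) = y₁²y₂² and ε > 0. Then |X(t)| ≤ |x| + √2·M·t for all t ∈ [0,T). -/
/-- Bound on perturbed trajectories: if |f| ≤ M and Ẋ = f(X,α) − (1/ε)∇d(X) with
    d(y) = y₁²y₂², then |X(t)| ≤ |x| + √2 M t on [0,T). -/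
theorem perturbed_traj_bound {A : Type*} (f : ℝ × ℝ → A → ℝ × ℝ) (M ε T x₁ x₂ : ℝ)
    (α : ℝ → A) (X₁ X₂ : ℝ → ℝ)
    (hM : ∀ p a, Real.sqrt ((f p a).1 ^ 2 + (f p a).2 ^ 2) ≤ M)
    (hε : 0 < ε)
    (hX₁ : ∀ t ∈ Set.Ico (0 : ℝ) T,
      HasDerivAt X₁ ((f (X₁ t, X₂ t) (α t)).1 - (1 / ε) * (2 * X₁ t * (X₂ t) ^ 2)) t)
    (hX₂ : ∀ t ∈ Set.Ico (0 : ℝ) T,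
      HasDerivAt X₂ ((f (X₁ t, X₂ t) (α t)).2 - (1 / ε) * (2 * (X₁ t) ^ 2 * X₂ t)) t)
    (hinit₁ : X₁ 0 = x₁) (hinit₂ : X₂ 0 = x₂) :
    ∀ t ∈ Set.Ico (0 : ℝ) T,
      Real.sqrt ((X₁ t) ^ 2 + (X₂ t) ^ 2)
        ≤ Real.sqrt (x₁ ^ 2 + x₂ ^ 2) + Real.sqrt 2 * M * t := by
  intro t ht
  obtain ⟨ht0, htT⟩ := ht
  have hM0 : 0 ≤ M := le_trans (Real.sqrt_nonneg _) (hM (x₁, x₂) (α 0))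
  -- main estimate with M instead of √2 M
  have main : Real.sqrt ((X₁ t) ^ 2 + (X₂ t) ^ 2)
      ≤ Real.sqrt (x₁ ^ 2 + x₂ ^ 2) + M * t := by
    rw [← hinit₁, ← hinit₂]
    have key : ∀ δ : ℝ, 0 < δ →
        Real.sqrt ((X₁ t) ^ 2 + (X₂ t) ^ 2)
          ≤ (Real.sqrt ((X₁ 0) ^ 2 + (X₂ 0) ^ 2) + M * t) + δ := by
      intro δ hδ
      set w : ℝ → ℝ := fun s => Real.sqrt ((X₁ s) ^ 2 + (X₂ s) ^ 2 + δ ^ 2) with hw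
      -- derivative of w on Ico 0 T
      have hwderiv : ∀ s ∈ Set.Ico (0 : ℝ) T, HasDerivAt w
          ((2 * X₁ s * ((f (X₁ s, X₂ s) (α s)).1 - (1 / ε) * (2 * X₁ s * (X₂ s) ^ 2))
            + 2 * X₂ s * ((f (X₁ s, X₂ s) (α s)).2 - (1 / ε) * (2 * (X₁ s) ^ 2 * X₂ s)))
            / (2 * Real.sqrt ((X₁ s) ^ 2 + (X₂ s) ^ 2 + δ ^ 2))) s := by
        intro s hs
        have hpos : (0:ℝ) < (X₁ s) ^ 2 + (X₂ s) ^ 2 + δ ^ 2 := by positivity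
        have hv : HasDerivAt (fun s => (X₁ s) ^ 2 + (X₂ s) ^ 2 + δ ^ 2)
            (2 * X₁ s * ((f (X₁ s, X₂ s) (α s)).1 - (1 / ε) * (2 * X₁ s * (X₂ s) ^ 2))
              + 2 * X₂ s * ((f (X₁ s, X₂ s) (α s)).2 - (1 / ε) * (2 * (X₁ s) ^ 2 * X₂ s))) s := by
          have h1 := ((hX₁ s hs).pow 2)
          have h2 := ((hX₂ s hs).pow 2)
          have := (h1.add h2).add_const (δ ^ 2)
          exact (this : HasDerivAt (fun s => (X₁ s) ^ 2 + (X₂ s) ^ 2 + δ ^ 2) _ s).congr_deriv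
            (by norm_num)
        exact hv.sqrt (ne_of_gt hpos)
      -- the derivative is at most M
      have hwle : ∀ s ∈ Set.Ico (0 : ℝ) T,
          (2 * X₁ s * ((f (X₁ s, X₂ s) (α s)).1 - (1 / ε) * (2 * X₁ s * (X₂ s) ^ 2))
            + 2 * X₂ s * ((f (X₁ s, X₂ s) (α s)).2 - (1 / ε) * (2 * (X₁ s) ^ 2 * X₂ s)))
            / (2 * Real.sqrt ((X₁ s) ^ 2 + (X₂ s) ^ 2 + δ ^ 2)) ≤ M := by
        intro s hs
        set a := X₁ s; set b := X₂ s
        set p := (f (a, b) (α s)).1; set q := (f (a, b) (α s)).2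
        have hpos : (0:ℝ) < a ^ 2 + b ^ 2 + δ ^ 2 := by positivity
        have hr : 0 < Real.sqrt (a ^ 2 + b ^ 2 + δ ^ 2) := Real.sqrt_pos.mpr hpos
        rw [div_le_iff₀ (by linarith)]
        -- Cauchy–Schwarz : a*p + b*q ≤ √(a²+b²) √(p²+q²)
        have hab : Real.sqrt (a ^ 2 + b ^ 2) ≤ Real.sqrt (a ^ 2 + b ^ 2 + δ ^ 2) :=
          Real.sqrt_le_sqrt (by nlinarith [sq_nonneg δ])
        have hfM : Real.sqrt (p ^ 2 + q ^ 2) ≤ M := hM (a, b) (α s)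
        have hcs : a * p + b * q ≤ Real.sqrt (a ^ 2 + b ^ 2) * Real.sqrt (p ^ 2 + q ^ 2) := by
          have h1 : (a * p + b * q) ^ 2 ≤ (a ^ 2 + b ^ 2) * (p ^ 2 + q ^ 2) := by
            nlinarith [sq_nonneg (a * q - b * p)]
          have h2 : 0 ≤ Real.sqrt (a ^ 2 + b ^ 2) * Real.sqrt (p ^ 2 + q ^ 2) :=
            mul_nonneg (Real.sqrt_nonneg _) (Real.sqrt_nonneg _)
          nlinarith [Real.sq_sqrt (by positivity : (0:ℝ) ≤ a ^ 2 + b ^ 2),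
            Real.sq_sqrt (by positivity : (0:ℝ) ≤ p ^ 2 + q ^ 2)]
        have hgrad : 0 ≤ (1 / ε) * (a ^ 2 * b ^ 2) := by positivity
        have hcs2 : a * p + b * q ≤ M * Real.sqrt (a ^ 2 + b ^ 2 + δ ^ 2) := by
          calc a * p + b * q ≤ Real.sqrt (a ^ 2 + b ^ 2) * Real.sqrt (p ^ 2 + q ^ 2) := hcs
            _ ≤ Real.sqrt (a ^ 2 + b ^ 2 + δ ^ 2) * M :=
              mul_le_mul hab hfM (Real.sqrt_nonneg _) (Real.sqrt_nonneg _)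
            _ = M * Real.sqrt (a ^ 2 + b ^ 2 + δ ^ 2) := by ring
        nlinarith [hr]
      -- monotonicity of s ↦ M * s - w s on [0, t]
      have hsub : Set.Icc (0:ℝ) t ⊆ Set.Ico (0:ℝ) T := fun s hs =>
        ⟨hs.1, lt_of_le_of_lt hs.2 htT⟩
      have hmono : MonotoneOn (fun s => M * s - w s) (Set.Icc (0:ℝ) t) := by
        apply monotoneOn_of_deriv_nonneg (convex_Icc 0 t)
        · intro s hs
          exact ((hasDerivAt_id s).const_mul M |>.sub (hwderiv s (hsub hs))).continuousAt.continuousWithinAt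
        · intro s hs
          rw [interior_Icc] at hs
          exact (((hasDerivAt_id s).const_mul M |>.sub
            (hwderiv s (hsub (Set.mem_Icc_of_Ioo hs)))).differentiableAt).differentiableWithinAt
        · intro s hs
          rw [interior_Icc] at hs
          have hd := ((hasDerivAt_id s).const_mul M |>.sub (hwderiv s (hsub (Set.mem_Icc_of_Ioo hs))))
          have hd' : HasDerivAt (fun s => M * s - w s)
              (M * 1 - (2 * X₁ s * ((f (X₁ s, X₂ s) (α s)).1 - 1 / ε * (2 * X₁ s * X₂ s ^ 2)) +
                2 * X₂ s * ((f (X₁ s, X₂ s) (α s)).2 - 1 / ε * (2 * X₁ s ^ 2 * X₂ s))) /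
                (2 * Real.sqrt (X₁ s ^ 2 + X₂ s ^ 2 + δ ^ 2))) s := by exact hd
          rw [hd'.deriv]
          have := hwle s (hsub (Set.mem_Icc_of_Ioo hs))
          simp only [mul_one]
          linarith
      have hFt := hmono (Set.left_mem_Icc.mpr ht0) (Set.right_mem_Icc.mpr ht0) ht0
      simp only at hFt
      -- so w t ≤ w 0 + M * t
      have hw0 : w 0 ≤ Real.sqrt ((X₁ 0) ^ 2 + (X₂ 0) ^ 2) + δ := by
        have h1 : (X₁ 0) ^ 2 + (X₂ 0) ^ 2 + δ ^ 2
            ≤ (Real.sqrt ((X₁ 0) ^ 2 + (X₂ 0) ^ 2) + δ) ^ 2 := by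
          nlinarith [Real.sq_sqrt (by positivity : (0:ℝ) ≤ (X₁ 0) ^ 2 + (X₂ 0) ^ 2),
            Real.sqrt_nonneg ((X₁ 0) ^ 2 + (X₂ 0) ^ 2), hδ.le]
        calc w 0 ≤ Real.sqrt ((Real.sqrt ((X₁ 0) ^ 2 + (X₂ 0) ^ 2) + δ) ^ 2) :=
            Real.sqrt_le_sqrt h1
          _ = Real.sqrt ((X₁ 0) ^ 2 + (X₂ 0) ^ 2) + δ := by
            rw [Real.sqrt_sq (by positivity)]
      have hvw : Real.sqrt ((X₁ t) ^ 2 + (X₂ t) ^ 2) ≤ w t :=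
        Real.sqrt_le_sqrt (by nlinarith [sq_nonneg δ])
      have : M * 0 - w 0 ≤ M * t - w t := hFt
      linarith
    have := le_of_forall_pos_le_add key
    linarith
  -- conclude using M * t ≤ √2 * M * t
  have h2 : (1:ℝ) ≤ Real.sqrt 2 := by
    nlinarith [Real.sq_sqrt (by norm_num : (0:ℝ) ≤ 2), Real.sqrt_nonneg 2]
  nlinarith [mul_nonneg hM0 ht0]
end

section
/- Let d(x) = x₁²x₂², ε > 0, and let X : [0,∞) → ℝ² be absolutely continuous with Ẋ(t) = f(X(t),α(t)) − (1/ε)∇d(X(t)) a.e., where |f(y,a)| ≤ M for all y, a. Then for all 0 ≤ t₁ ≤ t₂, d(X(t₂)) − d(X(t₁)) ≤ (t₂ − t₁)·(M²/2)·ε. -/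
/-- Along a perturbed trajectory, d(X(t₂)) − d(X(t₁)) ≤ (t₂−t₁) M² ε / 2. -/
theorem d_increase_bound {A : Type*} (f : ℝ × ℝ → A → ℝ × ℝ) (M ε : ℝ)
    (α : ℝ → A) (X₁ X₂ : ℝ → ℝ)
    (hM : ∀ p a, Real.sqrt ((f p a).1 ^ 2 + (f p a).2 ^ 2) ≤ M)
    (hε : 0 < ε)
    (hX₁ : ∀ t, 0 ≤ t →
      HasDerivAt X₁ ((f (X₁ t, X₂ t) (α t)).1 - (1 / ε) * (2 * X₁ t * (X₂ t) ^ 2)) t)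
    (hX₂ : ∀ t, 0 ≤ t →
      HasDerivAt X₂ ((f (X₁ t, X₂ t) (α t)).2 - (1 / ε) * (2 * (X₁ t) ^ 2 * X₂ t)) t) :
    ∀ t₁ t₂ : ℝ, 0 ≤ t₁ → t₁ ≤ t₂ →
      (X₁ t₂) ^ 2 * (X₂ t₂) ^ 2 - (X₁ t₁) ^ 2 * (X₂ t₁) ^ 2
        ≤ (t₂ - t₁) * (M ^ 2 / 2) * ε := by
  intro t₁ t₂ ht₁ ht
  set C : ℝ := M ^ 2 / 2 * ε with hC
  set g : ℝ → ℝ := fun t => (X₁ t) ^ 2 * (X₂ t) ^ 2 with hg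
  -- pointwise derivative of g and its bound
  have hM2 : ∀ p a, (f p a).1 ^ 2 + (f p a).2 ^ 2 ≤ M ^ 2 := by
    intro p a
    have h0 : (0:ℝ) ≤ (f p a).1 ^ 2 + (f p a).2 ^ 2 := by positivity
    have h1 := hM p a
    have h2 : (0:ℝ) ≤ Real.sqrt ((f p a).1 ^ 2 + (f p a).2 ^ 2) := Real.sqrt_nonneg _
    nlinarith [Real.sq_sqrt h0]
  have key : ∀ t, 0 ≤ t → ∃ g', HasDerivAt g g' t ∧ g' ≤ C := by
    intro t ht
    set f₁ := (f (X₁ t, X₂ t) (α t)).1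
    set f₂ := (f (X₁ t, X₂ t) (α t)).2
    set a : ℝ := 2 * X₁ t * (X₂ t) ^ 2 with ha
    set b : ℝ := 2 * (X₁ t) ^ 2 * X₂ t with hb
    have hd : HasDerivAt g
        ((2 * X₁ t ^ 1 * (f₁ - 1 / ε * a)) * (X₂ t) ^ 2
          + (X₁ t) ^ 2 * (2 * X₂ t ^ 1 * (f₂ - 1 / ε * b))) t :=
      (((hX₁ t ht).pow 2).mul ((hX₂ t ht).pow 2))
    refine ⟨_, hd, ?_⟩
    have heq : (2 * X₁ t ^ 1 * (f₁ - 1 / ε * a)) * (X₂ t) ^ 2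
          + (X₁ t) ^ 2 * (2 * X₂ t ^ 1 * (f₂ - 1 / ε * b))
        = a * f₁ + b * f₂ - (a ^ 2 + b ^ 2) / ε := by
      field_simp [ha, hb]; ring
    rw [heq]
    have hf : f₁ ^ 2 + f₂ ^ 2 ≤ M ^ 2 := hM2 _ _
    rw [hC, sub_le_iff_le_add]
    nlinarith [sq_nonneg (a - ε * f₁), sq_nonneg (b - ε * f₂), hε,
      div_mul_cancel₀ (a ^ 2 + b ^ 2) hε.ne',
      mul_le_mul_of_nonneg_right hf (sq_nonneg ε)]
  -- monotonicity of h t = C t - g t on [0, ∞)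
  have hmono : MonotoneOn (fun t => C * t - g t) (Set.Ici 0) := by
    apply monotoneOn_of_deriv_nonneg (convex_Ici 0)
    · intro t ht
      obtain ⟨g', hd, _⟩ := key t ht
      exact ((continuous_const.mul continuous_id).continuousAt.sub hd.continuousAt).continuousWithinAt
    · intro t ht
      obtain ⟨g', hd, _⟩ := key t (le_of_lt (by simpa using ht))
      exact ((hasDerivAt_id t).const_mul C |>.sub hd).differentiableAt.differentiableWithinAt
    · intro t ht
      rw [interior_Ici] at ht
      obtain ⟨g', hd, hle⟩ := key t ht.le
      have hD : HasDerivAt (fun t => C * t - g t) (C - g') t := by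
        have h := ((hasDerivAt_id t).const_mul C).sub hd
        rw [mul_one] at h
        exact h
      rw [hD.deriv]; linarith
  have := hmono (Set.mem_Ici.mpr ht₁) (Set.mem_Ici.mpr (ht₁.trans ht)) ht
  simp only [hg] at this
  nlinarith [this]
end

section
/- Let d(x) = x₁²x₂² and suppose |f(y,a)| ≤ M for all y ∈ ℝ², a ∈ A. If λ ≥ κ ε^{4/3} with κ = 2^{−4/3} M^{4/3}, then for every x with d(x) = λ (and ∇d(x) ≠ 0) and every a ∈ A, ⟨f(x,a) − (1/ε)∇d(x), ∇d(x)/|∇d(x)|⟩ ≤ 0. In particular the sublevel set Z(λ) = {d ≤ λ} is invariant for the ODE Ẋ = f(X,α) − (1/ε)∇d(X). -/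
/-- On the level set {d = λ} with λ ≥ κ ε^{4/3}, κ = 2^{-4/3} M^{4/3}, the perturbed
    vector field points inward: ⟨F^ε(x,a), ∇d(x)/|∇d(x)|⟩ ≤ 0. -/
theorem level_set_inward {A : Type*} (f : ℝ × ℝ → A → ℝ × ℝ) (M ε lam : ℝ)
    (hM : ∀ p a, Real.sqrt ((f p a).1 ^ 2 + (f p a).2 ^ 2) ≤ M)
    (hε : 0 < ε)
    (hlam : (2 : ℝ) ^ (-(4 : ℝ) / 3) * M ^ ((4 : ℝ) / 3) * ε ^ ((4 : ℝ) / 3) ≤ lam)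
    (x₁ x₂ : ℝ) (hx : x₁ ^ 2 * x₂ ^ 2 = lam)
    (hgrad : (2 * x₁ * x₂ ^ 2, 2 * x₁ ^ 2 * x₂) ≠ ((0 : ℝ), (0 : ℝ))) (a : A) :
    ((f (x₁, x₂) a).1 - (1 / ε) * (2 * x₁ * x₂ ^ 2)) *
        (2 * x₁ * x₂ ^ 2 / Real.sqrt ((2 * x₁ * x₂ ^ 2) ^ 2 + (2 * x₁ ^ 2 * x₂) ^ 2))
      + ((f (x₁, x₂) a).2 - (1 / ε) * (2 * x₁ ^ 2 * x₂)) *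
        (2 * x₁ ^ 2 * x₂ / Real.sqrt ((2 * x₁ * x₂ ^ 2) ^ 2 + (2 * x₁ ^ 2 * x₂) ^ 2))
      ≤ 0 := by
  have hx1 : x₁ ≠ 0 := by rintro rfl; simp at hgrad
  have hx2 : x₂ ≠ 0 := by rintro rfl; simp at hgrad
  set f1 := (f (x₁, x₂) a).1 with hf1
  set f2 := (f (x₁, x₂) a).2 with hf2
  set g1 : ℝ := 2 * x₁ * x₂ ^ 2 with hg1
  set g2 : ℝ := 2 * x₁ ^ 2 * x₂ with hg2
  have hMnn : 0 ≤ M := le_trans (Real.sqrt_nonneg _) (hM (x₁, x₂) a)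
  have hfM : f1 ^ 2 + f2 ^ 2 ≤ M ^ 2 := by
    have h := hM (x₁, x₂) a
    have h2 := Real.sq_sqrt (by positivity : (0:ℝ) ≤ f1 ^ 2 + f2 ^ 2)
    nlinarith [Real.sqrt_nonneg (f1 ^ 2 + f2 ^ 2)]
  have hs2pos : 0 < g1 ^ 2 + g2 ^ 2 := by
    rcases lt_or_eq_of_le (by positivity : (0:ℝ) ≤ g1 ^ 2 + g2 ^ 2) with h | h
    · exact h
    · exfalso
      have h1 : g1 = 0 := by nlinarith [sq_nonneg g1, sq_nonneg g2]
      have h2 : g2 = 0 := by nlinarith [sq_nonneg g1, sq_nonneg g2]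
      exact hgrad (by simp [h1, h2])
  set s : ℝ := Real.sqrt (g1 ^ 2 + g2 ^ 2) with hs
  have hspos : 0 < s := Real.sqrt_pos.mpr hs2pos
  have hssq : s ^ 2 = g1 ^ 2 + g2 ^ 2 := Real.sq_sqrt hs2pos.le
  -- λ > 0
  have hlampos : 0 < lam := by rw [← hx]; positivity
  -- key lower bound : M * ε ≤ s
  have hkey : M * ε ≤ s := by
    rw [hs]
    rw [show M * ε = Real.sqrt ((M * ε) ^ 2) from
      (Real.sqrt_sq (by positivity)).symm]
    apply Real.sqrt_le_sqrt
    -- (M ε)² ≤ g1² + g2² = 4 λ (x₁² + x₂²) ≥ 8 λ^{3/2} ≥ 8 (Mε/2)²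
    have hsum : g1 ^ 2 + g2 ^ 2 = 4 * lam * (x₁ ^ 2 + x₂ ^ 2) := by
      rw [← hx, hg1, hg2]; ring
    have hsqrtlam : Real.sqrt lam = |x₁ * x₂| := by
      rw [← hx, show x₁ ^ 2 * x₂ ^ 2 = (x₁ * x₂) ^ 2 by ring, Real.sqrt_sq_eq_abs]
    have hamgm : 2 * Real.sqrt lam ≤ x₁ ^ 2 + x₂ ^ 2 := by
      rw [hsqrtlam]
      have := abs_mul x₁ x₂
      nlinarith [sq_nonneg (|x₁| - |x₂|), sq_abs x₁, sq_abs x₂]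
    -- rpow computation: (2^{-4/3} M^{4/3} ε^{4/3}) = (M ε / 2)^{4/3}
    have hc : (2 : ℝ) ^ (-(4 : ℝ) / 3) * M ^ ((4 : ℝ) / 3) * ε ^ ((4 : ℝ) / 3)
        = (M * ε / 2) ^ ((4 : ℝ) / 3) := by
      rw [show M * ε / 2 = M * ε * 2⁻¹ by ring]
      rw [Real.mul_rpow (by positivity) (by positivity),
          Real.mul_rpow hMnn hε.le]
      rw [show ((2 : ℝ)⁻¹) = (2 : ℝ) ^ (-1 : ℝ) by
        rw [Real.rpow_neg_one]]
      rw [← Real.rpow_mul (by norm_num : (0:ℝ) ≤ 2)]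
      norm_num
      ring
    rw [hc] at hlam
    rcases eq_or_lt_of_le hMnn with hM0 | hMpos
    · rw [← hM0]
      have : ((0:ℝ) * ε) ^ 2 = 0 := by ring
      rw [this]
      positivity
    · set t : ℝ := M * ε / 2 with ht
      have htpos : 0 < t := by positivity
      have hc2 : t ^ ((4:ℝ)/3) * Real.sqrt (t ^ ((4:ℝ)/3)) = t ^ 2 := by
        rw [Real.sqrt_eq_rpow, ← Real.rpow_natCast t 2,
            ← Real.rpow_mul htpos.le, ← Real.rpow_add htpos]
        norm_num
      have hlam' : t ^ ((4:ℝ)/3) ≤ lam := hlam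
      have hmono : t ^ ((4:ℝ)/3) * Real.sqrt (t ^ ((4:ℝ)/3)) ≤ lam * Real.sqrt lam :=
        mul_le_mul hlam' (Real.sqrt_le_sqrt hlam') (Real.sqrt_nonneg _) hlampos.le
      rw [hc2] at hmono
      rw [hsum]
      have hME : (M * ε) ^ 2 = 4 * t ^ 2 := by rw [ht]; ring
      rw [hME]
      have hnn : 0 ≤ lam * Real.sqrt lam := by positivity
      calc (4:ℝ) * t ^ 2 ≤ 8 * (lam * Real.sqrt lam) := by linarith
        _ = 4 * lam * (2 * Real.sqrt lam) := by ring
        _ ≤ 4 * lam * (x₁ ^ 2 + x₂ ^ 2) :=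
            mul_le_mul_of_nonneg_left hamgm (by positivity)
  clear_value f1 f2 g1 g2 s
  clear hM hgrad hlam hx hf1 hf2 hg1 hg2 hs hlampos hx1 hx2 a f x₁ x₂ lam
  -- rewrite the goal as a single fraction
  have hgoal : (f1 - 1 / ε * g1) * (g1 / s) + (f2 - 1 / ε * g2) * (g2 / s)
      = ((f1 - 1 / ε * g1) * g1 + (f2 - 1 / ε * g2) * g2) / s := by
    field_simp
  rw [hgoal]
  apply div_nonpos_of_nonpos_of_nonneg _ hspos.le
  -- Cauchy–Schwarz
  have hcs2 : (f1 * g1 + f2 * g2) ^ 2 ≤ (M * s) ^ 2 := by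
    have h1 : (f1 * g1 + f2 * g2) ^ 2 ≤ (f1 ^ 2 + f2 ^ 2) * (g1 ^ 2 + g2 ^ 2) := by
      nlinarith [sq_nonneg (f1 * g2 - f2 * g1)]
    have h2 : (f1 ^ 2 + f2 ^ 2) * (g1 ^ 2 + g2 ^ 2) ≤ M ^ 2 * (g1 ^ 2 + g2 ^ 2) :=
      mul_le_mul_of_nonneg_right hfM hs2pos.le
    calc (f1 * g1 + f2 * g2) ^ 2 ≤ M ^ 2 * (g1 ^ 2 + g2 ^ 2) := le_trans h1 h2
      _ = (M * s) ^ 2 := by rw [← hssq]; ring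
  have hMs : 0 ≤ M * s := by positivity
  have hcs : f1 * g1 + f2 * g2 ≤ M * s := by nlinarith
  -- finish: M s - (1/ε) s² ≤ 0 since s ≥ M ε
  have hfin : M * s - (1 / ε) * s ^ 2 ≤ 0 := by
    rw [sub_nonpos]
    have : M * s ≤ (s / ε) * s := by
      apply mul_le_mul_of_nonneg_right _ hspos.le
      rw [le_div_iff₀ hε]
      exact hkey
    calc M * s ≤ (s / ε) * s := this
      _ = 1 / ε * s ^ 2 := by ring
  have hr : (f1 - 1 / ε * g1) * g1 + (f2 - 1 / ε * g2) * g2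
      = f1 * g1 + f2 * g2 - 1 / ε * (g1 ^ 2 + g2 ^ 2) := by ring
  rw [hr, ← hssq]
  linarith
end

section
/- Let d(x) = x₁²x₂², γ < 1, M ≥ 0, and ε ≤ (4M/7)^{−1/(1−γ)}. Suppose X is an absolutely continuous solution of Ẋ = f(X,α) − (1/ε)∇d(X) with |f| ≤ M, and suppose d(X(t)) > ε^{4γ/3} for all t ∈ [0,τ). Then for a.e. t ∈ [0,τ), −(d/dt)d(X(t)) ≥ ε^{γ−1}·d(X(t))^{3/4}; consequently τ ≤ 4 d(X(0))^{1/4} ε^{1−γ}. -/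
theorem aux_ineq (E P N M ε : ℝ) (hε : 0 < ε) (hN0 : 0 ≤ N) (hP0 : 0 < P)
    (hN2P : 8 * P ^ 2 ≤ N ^ 2) (hεE : ε * E < P) (hM74 : M ≤ 7 / 4 * E) :
    (E * P + N * M) * ε ≤ N ^ 2 := by
  have hA1 : (ε * N) * M ≤ (ε * N) * (7 / 4 * E) :=
    mul_le_mul_of_nonneg_left hM74 (mul_nonneg hε.le hN0)
  have hA2 : (ε * E) * N ≤ P * N := mul_le_mul_of_nonneg_right hεE.le hN0
  have hA3 : (ε * E) * P ≤ P * P := mul_le_mul_of_nonneg_right hεE.le hP0.le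
  nlinarith [hA1, hA2, hA3, hN2P, sq_nonneg (N - 2 * P)]

set_option maxHeartbeats 1600000 in
/-- While d(X) stays above ε^{4γ/3}, d(X) decreases at rate at least ε^{γ-1} d(X)^{3/4},
    and the trajectory reaches the layer before time 4 d(X(0))^{1/4} ε^{1-γ}. -/
theorem decay_rate_and_entry_time {A : Type*} (f : ℝ × ℝ → A → ℝ × ℝ) (M ε γ τ : ℝ)
    (α : ℝ → A) (X₁ X₂ : ℝ → ℝ)
    (hγ : γ < 1) (hM : 0 ≤ M)
    (hMf : ∀ p a, Real.sqrt ((f p a).1 ^ 2 + (f p a).2 ^ 2) ≤ M)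
    (hε : 0 < ε) (hεsmall : ε ≤ (4 * M / 7) ^ (-(1 : ℝ) / (1 - γ)))
    (hX₁ : ∀ t ∈ Set.Ico (0 : ℝ) τ,
      HasDerivAt X₁ ((f (X₁ t, X₂ t) (α t)).1 - (1 / ε) * (2 * X₁ t * (X₂ t) ^ 2)) t)
    (hX₂ : ∀ t ∈ Set.Ico (0 : ℝ) τ,
      HasDerivAt X₂ ((f (X₁ t, X₂ t) (α t)).2 - (1 / ε) * (2 * (X₁ t) ^ 2 * X₂ t)) t)
    (hfar : ∀ t ∈ Set.Ico (0 : ℝ) τ, ε ^ ((4 : ℝ) * γ / 3) < (X₁ t) ^ 2 * (X₂ t) ^ 2) :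
    (∀ t ∈ Set.Ico (0 : ℝ) τ, ∀ D : ℝ,
        HasDerivAt (fun s => (X₁ s) ^ 2 * (X₂ s) ^ 2) D t →
        ε ^ (γ - 1) * ((X₁ t) ^ 2 * (X₂ t) ^ 2) ^ ((3 : ℝ) / 4) ≤ -D) ∧
    τ ≤ 4 * ((X₁ 0) ^ 2 * (X₂ 0) ^ 2) ^ ((1 : ℝ) / 4) * ε ^ (1 - γ) := by
  have hE : 0 < ε ^ (γ - 1) := Real.rpow_pos_of_pos hε _
  set E := ε ^ (γ - 1) with hEdef
  have hεpow : 0 < ε ^ (1 - γ) := Real.rpow_pos_of_pos hε _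
  have hprod : ε ^ (1 - γ) * E = 1 := by
    rw [hEdef, ← Real.rpow_add hε, show (1 - γ) + (γ - 1) = 0 by ring, Real.rpow_zero]
  have hM74 : M ≤ 7 / 4 * E := by
    rcases hM.eq_or_lt with h0 | hMpos
    · nlinarith [hE]
    · have h1 : (0:ℝ) < 4 * M / 7 := by linarith
      have h2 : ε ^ (1 - γ) ≤ ((4 * M / 7) ^ (-(1:ℝ) / (1 - γ))) ^ (1 - γ) :=
        Real.rpow_le_rpow hε.le hεsmall (by linarith)
      have h3 : ((4 * M / 7) ^ (-(1:ℝ) / (1 - γ))) ^ (1 - γ) = (4 * M / 7)⁻¹ := by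
        rw [← Real.rpow_mul h1.le,
          show -(1:ℝ) / (1 - γ) * (1 - γ) = -1 from
            div_mul_cancel₀ _ (by linarith : (1:ℝ) - γ ≠ 0), Real.rpow_neg_one]
      have h4 : M * ε ^ (1 - γ) ≤ 7 / 4 := by
        have h5 := mul_le_mul_of_nonneg_left (h2.trans_eq h3) hM
        have h6 : M * (4 * M / 7)⁻¹ = 7 / 4 := by field_simp
        linarith [h5, h6.le, h6.ge]
      calc M = M * ε ^ (1 - γ) * E := by rw [mul_assoc, hprod, mul_one]
        _ ≤ 7 / 4 * E := mul_le_mul_of_nonneg_right h4 hE.le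
  have part1 : ∀ t ∈ Set.Ico (0 : ℝ) τ, ∀ D : ℝ,
      HasDerivAt (fun s => (X₁ s) ^ 2 * (X₂ s) ^ 2) D t →
      E * ((X₁ t) ^ 2 * (X₂ t) ^ 2) ^ ((3 : ℝ) / 4) ≤ -D := by
    intro t ht D hD
    set a := X₁ t with ha
    set b := X₂ t with hb
    set u := (f (a, b) (α t)).1 with hu
    set w := (f (a, b) (α t)).2 with hw
    have hd : 0 < a ^ 2 * b ^ 2 := lt_trans (Real.rpow_pos_of_pos hε _) (hfar t ht)
    have h1 : HasDerivAt (fun s => (X₁ s) ^ 2 * (X₂ s) ^ 2)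
        (2 * a * (u - 1/ε * (2*a*b^2)) * b^2 + a^2 * (2 * b * (w - 1/ε * (2*a^2*b)))) t := by
      have h2 : HasDerivAt (fun s => (X₁ s) ^ 2 * (X₂ s) ^ 2) _ t :=
        ((hX₁ t ht).pow 2).mul ((hX₂ t ht).pow 2)
      convert h2 using 1
      simp only [Pi.pow_apply, hu, hw, ha, hb]
      push_cast
      ring
    rw [hD.unique h1]
    set N := Real.sqrt ((2*a*b^2)^2 + (2*a^2*b)^2) with hNdef
    set P := (a ^ 2 * b ^ 2) ^ ((3:ℝ)/4) with hPdef
    have hN0 : 0 ≤ N := Real.sqrt_nonneg _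
    have hN2 : N ^ 2 = (2*a*b^2)^2 + (2*a^2*b)^2 := Real.sq_sqrt (by positivity)
    have hP0 : 0 < P := Real.rpow_pos_of_pos hd _
    have hP2 : P ^ 2 = a ^ 2 * b ^ 2 * |a * b| := by
      rw [hPdef, ← Real.rpow_natCast ((a^2*b^2) ^ ((3:ℝ)/4)) 2, ← Real.rpow_mul hd.le]
      rw [show (3:ℝ)/4 * (2:ℕ) = 1 + 1/2 by push_cast; norm_num, Real.rpow_add hd,
        Real.rpow_one, ← Real.sqrt_eq_rpow, show a^2*b^2 = (a*b)^2 by ring,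
        Real.sqrt_sq_eq_abs]
    have habs : 2 * |a * b| ≤ a ^ 2 + b ^ 2 := by
      rw [abs_mul]
      nlinarith [sq_abs a, sq_abs b, sq_nonneg (|a| - |b|)]
    have hN2P : 8 * P ^ 2 ≤ N ^ 2 := by
      rw [hN2, hP2]
      nlinarith [mul_le_mul_of_nonneg_left habs (show (0:ℝ) ≤ 4 * (a^2*b^2) by positivity)]
    have hεE : ε * E < P := by
      have hγP : ε ^ γ < P := by
        have := Real.rpow_lt_rpow (Real.rpow_nonneg hε.le _) (hfar t ht)
          (show (0:ℝ) < 3/4 by norm_num)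
        rwa [← Real.rpow_mul hε.le, show (4:ℝ) * γ / 3 * (3/4) = γ by ring] at this
      calc ε * E = ε ^ (1:ℝ) * ε ^ (γ - 1) := by rw [Real.rpow_one, hEdef]
        _ = ε ^ γ := by rw [← Real.rpow_add hε]; ring_nf
        _ < P := hγP
    have hfM := hMf (a, b) (α t)
    have hsq : (2*a*b^2*u + 2*a^2*b*w)^2 ≤ ((2*a*b^2)^2 + (2*a^2*b)^2) * (u^2 + w^2) := by
      nlinarith [sq_nonneg (2*a*b^2*w - 2*a^2*b*u)]
    have hGM : 2*a*b^2*u + 2*a^2*b*w ≤ N * M := by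
      have hG : 2*a*b^2*u + 2*a^2*b*w ≤ N * Real.sqrt (u^2 + w^2) := by
        calc 2*a*b^2*u + 2*a^2*b*w ≤ |2*a*b^2*u + 2*a^2*b*w| := le_abs_self _
          _ = Real.sqrt ((2*a*b^2*u + 2*a^2*b*w)^2) := (Real.sqrt_sq_eq_abs _).symm
          _ ≤ Real.sqrt (((2*a*b^2)^2 + (2*a^2*b)^2) * (u^2 + w^2)) := Real.sqrt_le_sqrt hsq
          _ = N * Real.sqrt (u^2 + w^2) := Real.sqrt_mul (by positivity) _
      exact hG.trans (mul_le_mul_of_nonneg_left hfM hN0)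
    have hstep : E * P + N * M ≤ 1/ε * N ^ 2 := by
      rw [one_div, inv_mul_eq_div, le_div_iff₀ hε]
      exact aux_ineq E P N M ε hε hN0 hP0 hN2P hεE hM74
    have hMain : E * P ≤ 1/ε * ((2*a*b^2)^2 + (2*a^2*b)^2) - (2*a*b^2*u + 2*a^2*b*w) := by
      rw [← hN2]; linarith [hGM, hstep]
    calc E * P ≤ 1/ε * ((2*a*b^2)^2 + (2*a^2*b)^2) - (2*a*b^2*u + 2*a^2*b*w) := hMain
      _ = -(2 * a * (u - 1/ε * (2*a*b^2)) * b^2 + a^2 * (2 * b * (w - 1/ε * (2*a^2*b)))) := by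
        ring
  refine ⟨part1, ?_⟩
  have hB0 : 0 ≤ 4 * ((X₁ 0) ^ 2 * (X₂ 0) ^ 2) ^ ((1:ℝ)/4) * ε ^ (1 - γ) := by positivity
  by_contra hcon
  push_neg at hcon
  set B := 4 * ((X₁ 0) ^ 2 * (X₂ 0) ^ 2) ^ ((1:ℝ)/4) * ε ^ (1 - γ) with hBdef
  have hBmem : B ∈ Set.Ico (0:ℝ) τ := ⟨hB0, hcon⟩
  have hgpos : ∀ s ∈ Set.Ico (0:ℝ) τ, 0 < (X₁ s) ^ 2 * (X₂ s) ^ 2 :=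
    fun s hs => lt_trans (Real.rpow_pos_of_pos hε _) (hfar s hs)
  have hkey : ∀ s ∈ Set.Ico (0:ℝ) τ, ∃ q : ℝ,
      HasDerivAt (fun r => ((X₁ r) ^ 2 * (X₂ r) ^ 2) ^ ((1:ℝ)/4) + E/4 * r) q s ∧ q ≤ 0 := by
    intro s hs
    obtain ⟨G, hG⟩ : ∃ G, HasDerivAt (fun r => (X₁ r) ^ 2 * (X₂ r) ^ 2) G s :=
      ⟨_, ((hX₁ s hs).pow 2).mul ((hX₂ s hs).pow 2)⟩
    have hd : 0 < (X₁ s) ^ 2 * (X₂ s) ^ 2 := hgpos s hs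
    have hdr : E * ((X₁ s) ^ 2 * (X₂ s) ^ 2) ^ ((3:ℝ)/4) ≤ -G := part1 s hs G hG
    refine ⟨G * (1/4) * ((X₁ s) ^ 2 * (X₂ s) ^ 2) ^ ((1:ℝ)/4 - 1) + E/4 * 1,
      (hG.rpow_const (Or.inl hd.ne')).add ((hasDerivAt_id s).const_mul (E/4)), ?_⟩
    have hcancel : ((X₁ s) ^ 2 * (X₂ s) ^ 2) ^ ((3:ℝ)/4)
        * ((X₁ s) ^ 2 * (X₂ s) ^ 2) ^ (-(3:ℝ)/4) = 1 := by
      rw [← Real.rpow_add hd]; norm_num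
    have h1 : G ≤ -(E * ((X₁ s) ^ 2 * (X₂ s) ^ 2) ^ ((3:ℝ)/4)) := le_neg.mp hdr
    have h2 := mul_le_mul_of_nonneg_right h1
      (show (0:ℝ) ≤ (1/4) * ((X₁ s) ^ 2 * (X₂ s) ^ 2) ^ (-(3:ℝ)/4) by positivity)
    rw [show (1:ℝ)/4 - 1 = -(3:ℝ)/4 by norm_num]
    have h3 : G * (1/4) * ((X₁ s) ^ 2 * (X₂ s) ^ 2) ^ (-(3:ℝ)/4) ≤ -(E/4) := by
      calc G * (1/4) * ((X₁ s) ^ 2 * (X₂ s) ^ 2) ^ (-(3:ℝ)/4)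
          = G * ((1/4) * ((X₁ s) ^ 2 * (X₂ s) ^ 2) ^ (-(3:ℝ)/4)) := by ring
        _ ≤ -(E * ((X₁ s) ^ 2 * (X₂ s) ^ 2) ^ ((3:ℝ)/4))
            * ((1/4) * ((X₁ s) ^ 2 * (X₂ s) ^ 2) ^ (-(3:ℝ)/4)) := h2
        _ = -(E/4) * (((X₁ s) ^ 2 * (X₂ s) ^ 2) ^ ((3:ℝ)/4)
            * ((X₁ s) ^ 2 * (X₂ s) ^ 2) ^ (-(3:ℝ)/4)) := by ring
        _ = -(E/4) := by rw [hcancel, mul_one]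
    linarith
  have hsub : Set.Icc (0:ℝ) B ⊆ Set.Ico 0 τ := fun s hs => ⟨hs.1, lt_of_le_of_lt hs.2 hcon⟩
  have hanti : AntitoneOn (fun r => ((X₁ r) ^ 2 * (X₂ r) ^ 2) ^ ((1:ℝ)/4) + E/4 * r)
      (Set.Icc 0 B) := by
    apply antitoneOn_of_deriv_nonpos (convex_Icc 0 B)
    · exact fun s hs => (hkey s (hsub hs)).choose_spec.1.continuousAt.continuousWithinAt
    · rw [interior_Icc]
      exact fun s hs => (hkey s
        (hsub (Set.Ioo_subset_Icc_self hs))).choose_spec.1.differentiableAt.differentiableWithinAt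
    · rw [interior_Icc]
      intro s hs
      obtain ⟨q, hq, hq0⟩ := hkey s (hsub (Set.Ioo_subset_Icc_self hs))
      rw [hq.deriv]
      exact hq0
  have hle := hanti (Set.left_mem_Icc.mpr hB0) (Set.right_mem_Icc.mpr hB0) hB0
  simp only [mul_zero, add_zero] at hle
  have hvB : 0 < ((X₁ B) ^ 2 * (X₂ B) ^ 2) ^ ((1:ℝ)/4) :=
    Real.rpow_pos_of_pos (hgpos B hBmem) _
  have hEB : E * B = 4 * ((X₁ 0) ^ 2 * (X₂ 0) ^ 2) ^ ((1:ℝ)/4) := by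
    calc E * B = 4 * ((X₁ 0) ^ 2 * (X₂ 0) ^ 2) ^ ((1:ℝ)/4) * (ε ^ (1 - γ) * E) := by
          rw [hBdef]; ring
      _ = 4 * ((X₁ 0) ^ 2 * (X₂ 0) ^ 2) ^ ((1:ℝ)/4) := by rw [hprod, mul_one]
  nlinarith [hle, hvB, hEB]
end

section
/- (Łojasiewicz implies finite length and convergence of gradient descent) Let d : ℝ² → [0,∞) be C¹ with locally Lipschitz gradient, and suppose there exist ν > 0 and θ ∈ (0,1) such that |∇d(x)| ≥ ν d(x)^θ for all x. Let Z solve Ż = −∇d(Z), Z(0) = x, on [0,T). Then for all 0 ≤ t₁ ≤ t₂ < T, |Z(t₂) − Z(t₁)| ≤ ∫_{t₁}^{t₂}|Ż| ≤ (1/(ν(1−θ)))(d(Z(t₁))^{1−θ} − d(Z(t₂))^{1−θ}). Consequently Z is bounded (|Z(t)| ≤ |x| + d(x)^{1−θ}/(ν(1−θ))), the solution is global, and Z(t) converges to a limit x̄ with d(x̄) = 0 as t → ∞. -/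
open scoped Topology

set_option maxHeartbeats 2000000 in
/-- Łojasiewicz inequality implies the finite-length estimate, boundedness and
    convergence of the gradient descent to a zero of d. -/
theorem lojasiewicz_gradient_descent
    (d : EuclideanSpace ℝ (Fin 2) → ℝ) (ν θ : ℝ)
    (hd0 : ∀ x, 0 ≤ d x) (hd : ContDiff ℝ 1 d)
    (hlip : LocallyLipschitz (gradient d))
    (hν : 0 < ν) (hθ : θ ∈ Set.Ioo (0 : ℝ) 1)
    (hloj : ∀ x, ν * (d x) ^ θ ≤ ‖gradient d x‖)
    (x : EuclideanSpace ℝ (Fin 2)) (Z : ℝ → EuclideanSpace ℝ (Fin 2))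
    (hZ : ∀ t, 0 ≤ t → HasDerivAt Z (-(gradient d (Z t))) t)
    (hZ0 : Z 0 = x) :
    (∀ t₁ t₂ : ℝ, 0 ≤ t₁ → t₁ ≤ t₂ →
        ‖Z t₂ - Z t₁‖ ≤ (1 / (ν * (1 - θ))) * ((d (Z t₁)) ^ (1 - θ) - (d (Z t₂)) ^ (1 - θ))) ∧
    (∀ t, 0 ≤ t → ‖Z t‖ ≤ ‖x‖ + (d x) ^ (1 - θ) / (ν * (1 - θ))) ∧
    (∃ xbar : EuclideanSpace ℝ (Fin 2),
        d xbar = 0 ∧ Filter.Tendsto Z Filter.atTop (𝓝 xbar)) := by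
  obtain ⟨hθ0, hθ1⟩ := hθ
  have hp : (0:ℝ) < 1 - θ := by linarith
  set G := gradient d with hG
  set h : ℝ → ℝ := fun t => d (Z t) with hh
  have hGcont : Continuous G := hlip.continuous
  have hZconton : ∀ t, 0 ≤ t → ContinuousAt Z t := fun t ht => (hZ t ht).continuousAt
  have hh' : ∀ t, 0 ≤ t → HasDerivAt h (-(‖G (Z t)‖ ^ 2)) t := by
    intro t ht
    have hdiff : DifferentiableAt ℝ d (Z t) := (hd.differentiable one_ne_zero).differentiableAt
    have hgr : HasFDerivAt d ((InnerProductSpace.toDual ℝ _) (G (Z t))) (Z t) :=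
      hasGradientAt_iff_hasFDerivAt.1 hdiff.hasGradientAt
    have := hgr.comp_hasDerivAt t (hZ t ht)
    refine this.congr_deriv ?_
    rw [InnerProductSpace.toDual_apply_apply, inner_neg_right, real_inner_self_eq_norm_sq]
  have hzero : ∀ y, d y = 0 → G y = 0 := by
    intro y hy
    have hmin : IsLocalMin d y := by
      apply IsMinOn.isLocalMin (s := Set.univ) _ (by simp)
      intro z _
      simp [hy, hd0 z]
    have : fderiv ℝ d y = 0 := hmin.fderiv_eq_zero
    rw [hG, gradient, this]; simp
  -- the key integral inequality
  have key : ∀ t₁ t₂ : ℝ, 0 ≤ t₁ → t₁ ≤ t₂ →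
      ν * (1 - θ) * ∫ s in t₁..t₂, ‖G (Z s)‖ ≤ h t₁ ^ (1 - θ) - h t₂ ^ (1 - θ) := by
    intro t₁ t₂ ht₁ ht
    have hIcc0 : ∀ s ∈ Set.Icc t₁ t₂, (0:ℝ) ≤ s := fun s hs => ht₁.trans hs.1
    have ZcOn : ContinuousOn Z (Set.Icc t₁ t₂) :=
      fun s hs => ((hZconton s (hIcc0 s hs))).continuousWithinAt
    have hcOn : ContinuousOn h (Set.Icc t₁ t₂) := hd.continuous.comp_continuousOn ZcOn
    have GZcOn : ContinuousOn (fun s => ‖G (Z s)‖) (Set.Icc t₁ t₂) :=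
      (hGcont.comp_continuousOn ZcOn).norm
    have intNorm : IntervalIntegrable (fun s => ‖G (Z s)‖) MeasureTheory.volume t₁ t₂ :=
      (GZcOn.mono (by rw [Set.uIcc_of_le ht])).intervalIntegrable
    set φ : ℝ → ℝ → ℝ := fun ε s => ν * (1 - θ) * (h s ^ θ / (h s + ε) ^ θ) * ‖G (Z s)‖ with hφ
    -- step 1: for each ε > 0
    have step1 : ∀ ε > (0:ℝ), ∫ s in t₁..t₂, φ ε s ≤ (h t₁ + ε) ^ (1-θ) - (h t₂ + ε) ^ (1-θ) := by
      intro ε hε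
      have hpos : ∀ s ∈ Set.Icc t₁ t₂, 0 < h s + ε := fun s _ => by
        have := hd0 (Z s); simp only [hh]; linarith
      set D : ℝ → ℝ := fun s => (1-θ) * (h s + ε) ^ (1-θ-1) * (-(‖G (Z s)‖ ^ 2)) with hD
      have hder : ∀ s ∈ Set.Icc t₁ t₂, HasDerivAt (fun t => (h t + ε) ^ (1-θ)) (D s) s := by
        intro s hs
        have h1 : HasDerivAt (fun t => h t + ε) (-(‖G (Z s)‖ ^ 2)) s :=
          (hh' s (hIcc0 s hs)).add_const ε
        have h2 := Real.hasDerivAt_rpow_const (x := h s + ε) (p := 1-θ)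
          (Or.inl (hpos s hs).ne')
        exact h2.comp s h1
      have hDcont : ContinuousOn D (Set.Icc t₁ t₂) := by
        apply ContinuousOn.mul
        · exact continuousOn_const.mul <| (hcOn.add continuousOn_const).rpow_const
            (fun s hs => Or.inl (hpos s hs).ne')
        · exact (GZcOn.pow 2).neg
      have hDint : IntervalIntegrable D MeasureTheory.volume t₁ t₂ :=
        (hDcont.mono (by rw [Set.uIcc_of_le ht])).intervalIntegrable
      have hftc : ∫ s in t₁..t₂, D s = (h t₂ + ε) ^ (1-θ) - (h t₁ + ε) ^ (1-θ) := by
        apply intervalIntegral.integral_eq_sub_of_hasDerivAt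
        · intro s hs; exact hder s (by rwa [Set.uIcc_of_le ht] at hs)
        · exact hDint
      have hφcont : ContinuousOn (φ ε) (Set.Icc t₁ t₂) := by
        apply ContinuousOn.mul _ GZcOn
        apply continuousOn_const.mul
        apply ContinuousOn.div
        · exact hcOn.rpow_const (fun s _ => Or.inr hθ0.le)
        · exact (hcOn.add continuousOn_const).rpow_const (fun s hs => Or.inl (hpos s hs).ne')
        · intro s hs
          exact (Real.rpow_pos_of_pos (hpos s hs) θ).ne'
      have hφint : IntervalIntegrable (φ ε) MeasureTheory.volume t₁ t₂ :=
        (hφcont.mono (by rw [Set.uIcc_of_le ht])).intervalIntegrable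
      have hmono : ∀ s ∈ Set.Icc t₁ t₂, φ ε s ≤ -D s := by
        intro s hs
        have hA : (0:ℝ) < (h s + ε) ^ θ := Real.rpow_pos_of_pos (hpos s hs) θ
        have hrw : (h s + ε) ^ (1-θ-1) = ((h s + ε) ^ θ)⁻¹ := by
          rw [show (1-θ-1 : ℝ) = -θ by ring, Real.rpow_neg (hpos s hs).le]
        have e1 : ν * h s ^ θ * ‖G (Z s)‖ ≤ ‖G (Z s)‖ ^ 2 := by
          have := mul_le_mul_of_nonneg_right (hloj (Z s)) (norm_nonneg (G (Z s)))
          calc ν * h s ^ θ * ‖G (Z s)‖ ≤ ‖G (Z s)‖ * ‖G (Z s)‖ := this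
            _ = ‖G (Z s)‖ ^ 2 := (sq ‖G (Z s)‖).symm
        simp only [hφ, hD, hrw, div_eq_mul_inv]
        have hhs : (0:ℝ) ≤ h s ^ θ := Real.rpow_nonneg (hd0 (Z s)) θ
        have hAi : (0:ℝ) ≤ ((h s + ε) ^ θ)⁻¹ := by positivity
        nlinarith [mul_le_mul_of_nonneg_left e1 (mul_pos hp (inv_pos.2 hA)).le]
      have := intervalIntegral.integral_mono_on ht hφint hDint.neg hmono
      simp only [Pi.neg_apply] at this
      rw [intervalIntegral.integral_neg, hftc] at this
      linarith
    -- step 2: pass to the limit ε → 0⁺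
    have hL : Filter.Tendsto (fun ε => ∫ s in t₁..t₂, φ ε s) (𝓝[>] (0:ℝ))
        (𝓝 (∫ s in t₁..t₂, ν * (1-θ) * ‖G (Z s)‖)) := by
      apply intervalIntegral.tendsto_integral_filter_of_dominated_convergence
        (bound := fun s => ν * (1-θ) * ‖G (Z s)‖)
      · filter_upwards [self_mem_nhdsWithin] with ε (hε : ε ∈ Set.Ioi (0:ℝ))
        have hpos : ∀ s ∈ Set.Icc t₁ t₂, 0 < h s + ε := fun s _ => by
          have := hd0 (Z s); simp only [hh]; linarith [hε.out]
        have hφcont : ContinuousOn (φ ε) (Set.Icc t₁ t₂) := by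
          apply ContinuousOn.mul _ GZcOn
          apply continuousOn_const.mul
          apply ContinuousOn.div
          · exact hcOn.rpow_const (fun s _ => Or.inr hθ0.le)
          · exact (hcOn.add continuousOn_const).rpow_const (fun s hs => Or.inl (hpos s hs).ne')
          · intro s hs
            exact (Real.rpow_pos_of_pos (hpos s hs) θ).ne'
        have hsub : Set.uIoc t₁ t₂ ⊆ Set.Icc t₁ t₂ := by
          rw [Set.uIoc_of_le ht]; exact Set.Ioc_subset_Icc_self
        exact (hφcont.mono hsub).aestronglyMeasurable measurableSet_uIoc
      · filter_upwards [self_mem_nhdsWithin] with ε (hε : ε ∈ Set.Ioi (0:ℝ))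
        apply MeasureTheory.ae_of_all
        intro s _
        have hεpos : (0:ℝ) < ε := hε.out
        have hhs0 : (0:ℝ) ≤ h s := hd0 (Z s)
        have hden : (0:ℝ) < (h s + ε) ^ θ :=
          Real.rpow_pos_of_pos (by linarith) θ
        have hratio0 : (0:ℝ) ≤ h s ^ θ / (h s + ε) ^ θ :=
          div_nonneg (Real.rpow_nonneg hhs0 θ) hden.le
        have hratio1 : h s ^ θ / (h s + ε) ^ θ ≤ 1 := by
          rw [div_le_one hden]
          exact Real.rpow_le_rpow hhs0 (by linarith) hθ0.le
        have hφnn : 0 ≤ φ ε s := by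
          apply mul_nonneg _ (norm_nonneg _)
          exact mul_nonneg (by positivity) hratio0
        rw [Real.norm_eq_abs, abs_of_nonneg hφnn]
        simp only [hφ]
        have : ν * (1-θ) * (h s ^ θ / (h s + ε) ^ θ) ≤ ν * (1-θ) * 1 :=
          mul_le_mul_of_nonneg_left hratio1 (by positivity)
        calc ν * (1-θ) * (h s ^ θ / (h s + ε) ^ θ) * ‖G (Z s)‖
            ≤ ν * (1-θ) * 1 * ‖G (Z s)‖ :=
              mul_le_mul_of_nonneg_right this (norm_nonneg _)
          _ = ν * (1-θ) * ‖G (Z s)‖ := by ring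
      · exact intNorm.const_mul _
      · apply MeasureTheory.ae_of_all
        intro s _
        rcases eq_or_lt_of_le (hd0 (Z s)) with hs0 | hs0
        · have hGz : G (Z s) = 0 := hzero _ hs0.symm
          simp only [hφ, hGz, norm_zero, mul_zero]
          exact tendsto_const_nhds
        · have h1 : Filter.Tendsto (fun ε:ℝ => h s + ε) (𝓝[>] (0:ℝ)) (𝓝 (h s)) := by
            have : Filter.Tendsto (fun ε:ℝ => h s + ε) (𝓝 (0:ℝ)) (𝓝 (h s + 0)) :=
              (continuous_const.add continuous_id).tendsto 0
            rw [add_zero] at this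
            exact this.mono_left nhdsWithin_le_nhds
          have h2 : Filter.Tendsto (fun ε:ℝ => (h s + ε) ^ θ) (𝓝[>] (0:ℝ))
              (𝓝 ((h s) ^ θ)) :=
            ((Real.continuousAt_rpow_const (h s) θ (Or.inl hs0.ne')).tendsto).comp h1
          have h3 : Filter.Tendsto (fun ε:ℝ => h s ^ θ / (h s + ε) ^ θ) (𝓝[>] (0:ℝ))
              (𝓝 (h s ^ θ / h s ^ θ)) :=
            tendsto_const_nhds.div h2 (Real.rpow_pos_of_pos hs0 θ).ne'
          rw [div_self (Real.rpow_pos_of_pos hs0 θ).ne'] at h3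
          have h4 := (h3.const_mul (ν * (1-θ))).mul_const ‖G (Z s)‖
          rw [mul_one] at h4
          exact h4
    have hR : Filter.Tendsto (fun ε => (h t₁ + ε) ^ (1-θ) - (h t₂ + ε) ^ (1-θ))
        (𝓝[>] (0:ℝ)) (𝓝 (h t₁ ^ (1-θ) - h t₂ ^ (1-θ))) := by
      have haux : ∀ a : ℝ, 0 ≤ a → Filter.Tendsto (fun ε:ℝ => (a + ε) ^ (1-θ))
          (𝓝[>] (0:ℝ)) (𝓝 (a ^ (1-θ))) := by
        intro a _
        have h1 : Filter.Tendsto (fun ε:ℝ => a + ε) (𝓝 (0:ℝ)) (𝓝 (a + 0)) :=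
          (continuous_const.add continuous_id).tendsto 0
        rw [add_zero] at h1
        exact ((Real.continuousAt_rpow_const a (1-θ) (Or.inr hp.le)).tendsto).comp
          (h1.mono_left nhdsWithin_le_nhds)
      exact (haux _ (hd0 (Z t₁))).sub (haux _ (hd0 (Z t₂)))
    have hfin := le_of_tendsto_of_tendsto hL hR
      (by filter_upwards [self_mem_nhdsWithin] with ε hε; exact step1 ε hε.out)
    rwa [intervalIntegral.integral_const_mul] at hfin
  have hC : (0:ℝ) < ν * (1 - θ) := mul_pos hν hp
  -- FTC bound for Z
  have part1 : ∀ t₁ t₂ : ℝ, 0 ≤ t₁ → t₁ ≤ t₂ →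
      ‖Z t₂ - Z t₁‖ ≤ (1 / (ν * (1 - θ))) * (h t₁ ^ (1 - θ) - h t₂ ^ (1 - θ)) := by
    intro t₁ t₂ ht₁ ht
    have hIcc0 : ∀ s ∈ Set.Icc t₁ t₂, (0:ℝ) ≤ s := fun s hs => ht₁.trans hs.1
    have ZcOn : ContinuousOn Z (Set.Icc t₁ t₂) :=
      fun s hs => ((hZconton s (hIcc0 s hs))).continuousWithinAt
    have GZcOn : ContinuousOn (fun s => -G (Z s)) (Set.Icc t₁ t₂) :=
      (hGcont.comp_continuousOn ZcOn).neg
    have hint : IntervalIntegrable (fun s => -G (Z s)) MeasureTheory.volume t₁ t₂ :=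
      (GZcOn.mono (by rw [Set.uIcc_of_le ht])).intervalIntegrable
    have hftcZ : ∫ s in t₁..t₂, -G (Z s) = Z t₂ - Z t₁ := by
      apply intervalIntegral.integral_eq_sub_of_hasDerivAt
      · intro s hs
        rw [Set.uIcc_of_le ht] at hs
        exact hZ s (hIcc0 s hs)
      · exact hint
    have h1 : ‖Z t₂ - Z t₁‖ ≤ ∫ s in t₁..t₂, ‖G (Z s)‖ := by
      rw [← hftcZ]
      calc ‖∫ s in t₁..t₂, -G (Z s)‖ ≤ ∫ s in t₁..t₂, ‖-G (Z s)‖ :=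
            intervalIntegral.norm_integral_le_integral_norm ht
        _ = ∫ s in t₁..t₂, ‖G (Z s)‖ := by simp only [norm_neg]
    have h2 := key t₁ t₂ ht₁ ht
    calc ‖Z t₂ - Z t₁‖ ≤ ∫ s in t₁..t₂, ‖G (Z s)‖ := h1
      _ ≤ (1 / (ν * (1 - θ))) * (h t₁ ^ (1 - θ) - h t₂ ^ (1 - θ)) := by
          rw [one_div_mul_eq_div, le_div_iff₀ hC, mul_comm]
          exact h2
  have part2 : ∀ t, 0 ≤ t → ‖Z t‖ ≤ ‖x‖ + (d x) ^ (1 - θ) / (ν * (1 - θ)) := by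
    intro t ht
    have h1 := part1 0 t le_rfl ht
    have hx0 : h 0 = d x := by simp [hh, hZ0]
    have hht : (0:ℝ) ≤ h t ^ (1 - θ) := Real.rpow_nonneg (hd0 (Z t)) _
    have h2 : ‖Z t - Z 0‖ ≤ d x ^ (1 - θ) / (ν * (1 - θ)) := by
      rw [hx0] at h1
      calc ‖Z t - Z 0‖ ≤ (1 / (ν * (1 - θ))) * (d x ^ (1 - θ) - h t ^ (1 - θ)) := h1
        _ ≤ (1 / (ν * (1 - θ))) * (d x ^ (1 - θ)) := by
            apply mul_le_mul_of_nonneg_left _ (by positivity)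
            linarith
        _ = d x ^ (1 - θ) / (ν * (1 - θ)) := one_div_mul_eq_div _ _
    calc ‖Z t‖ = ‖Z 0 + (Z t - Z 0)‖ := by rw [add_sub_cancel]
      _ ≤ ‖Z 0‖ + ‖Z t - Z 0‖ := norm_add_le _ _
      _ ≤ ‖x‖ + d x ^ (1 - θ) / (ν * (1 - θ)) := by rw [hZ0] at h2 ⊢; linarith
  -- part 3 : convergence
  set C : ℝ := 1 / (ν * (1 - θ)) with hCdef
  have hCpos : 0 < C := by positivity
  set g : ℝ → ℝ := fun t => h (max t 0) ^ (1 - θ) with hgdef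
  have hgnn : ∀ t, 0 ≤ g t := fun t => Real.rpow_nonneg (hd0 _) _
  have hganti : Antitone g := by
    intro t₁ t₂ hle
    have h0a : (0:ℝ) ≤ max t₁ 0 := le_max_right _ _
    have hab : max t₁ 0 ≤ max t₂ 0 := max_le_max hle le_rfl
    have := (norm_nonneg (Z (max t₂ 0) - Z (max t₁ 0))).trans (part1 _ _ h0a hab)
    nlinarith [this, hCpos]
  have hbdd : BddBelow (Set.range g) := ⟨0, fun y ⟨t, ht⟩ => ht ▸ hgnn t⟩
  set L : ℝ := ⨅ t, g t with hLdef
  have hgL : Filter.Tendsto g Filter.atTop (𝓝 L) := tendsto_atTop_ciInf hganti hbdd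
  have hLle : ∀ t, L ≤ g t := fun t => ciInf_le hbdd t
  have hL0 : 0 ≤ L := le_ciInf hgnn
  have hgt : ∀ t : ℝ, 0 ≤ t → g t = h t ^ (1 - θ) := by
    intro t ht; rw [hgdef]; simp [max_eq_left ht]
  have hdistb : ∀ t₁ t₂ : ℝ, 0 ≤ t₁ → t₁ ≤ t₂ → dist (Z t₁) (Z t₂) ≤ C * (g t₁ - g t₂) := by
    intro t₁ t₂ ht₁ hle
    rw [dist_eq_norm, norm_sub_rev, hgt t₁ ht₁, hgt t₂ (ht₁.trans hle)]
    exact part1 t₁ t₂ ht₁ hle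
  have hb0 : Filter.Tendsto (fun N : ℕ => C * (g N - L)) Filter.atTop (𝓝 0) := by
    have h1 : Filter.Tendsto (fun N : ℕ => g N) Filter.atTop (𝓝 L) :=
      hgL.comp tendsto_natCast_atTop_atTop
    have := ((h1.sub_const L).const_mul C)
    simpa using this
  have hcauchy : CauchySeq (fun n : ℕ => Z n) := by
    apply cauchySeq_of_le_tendsto_0 (fun N : ℕ => C * (g N - L)) _ hb0
    intro n m N hn hm
    have haux : ∀ a b : ℕ, N ≤ a → a ≤ b → dist (Z a) (Z b) ≤ C * (g N - L) := by
      intro a b ha hab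
      have h1 := hdistb a b (Nat.cast_nonneg a) (by exact_mod_cast hab)
      have h2 : g a ≤ g N := hganti (by exact_mod_cast ha)
      have h3 : L ≤ g b := hLle _
      nlinarith [hCpos]
    rcases le_total n m with hnm | hnm
    · exact haux n m hn hnm
    · rw [dist_comm]; exact haux m n hm hnm
  obtain ⟨xbar, hxbar⟩ := cauchySeq_tendsto_of_complete hcauchy
  have hdZb : ∀ t : ℝ, 0 ≤ t → dist (Z t) xbar ≤ C * (g t - L) := by
    intro t ht
    have htend : Filter.Tendsto (fun n : ℕ => dist (Z t) (Z n)) Filter.atTop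
        (𝓝 (dist (Z t) xbar)) := tendsto_const_nhds.dist hxbar
    apply le_of_tendsto htend
    filter_upwards [Filter.eventually_ge_atTop ⌈t⌉₊] with n hn
    have htn : t ≤ (n:ℝ) := (Nat.le_ceil t).trans (by exact_mod_cast hn)
    calc dist (Z t) (Z n) ≤ C * (g t - g n) := hdistb t n ht htn
      _ ≤ C * (g t - L) := mul_le_mul_of_nonneg_left (by linarith [hLle ((n:ℝ))]) hCpos.le
  have hZbar : Filter.Tendsto Z Filter.atTop (𝓝 xbar) := by
    rw [tendsto_iff_dist_tendsto_zero]
    apply squeeze_zero' (Filter.Eventually.of_forall fun t => dist_nonneg)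
    · filter_upwards [Filter.eventually_ge_atTop (0:ℝ)] with t ht
      exact hdZb t ht
    · have := (hgL.sub_const L).const_mul C
      simpa using this
  -- d xbar = 0
  have hinv : ∀ t : ℝ, h (max t 0) = g t ^ (1 / (1 - θ)) := by
    intro t
    show h (max t 0) = (h (max t 0) ^ (1 - θ)) ^ (1 / (1 - θ))
    rw [← Real.rpow_mul (hd0 (Z (max t 0))), mul_one_div, div_self hp.ne', Real.rpow_one]
  have hM : Filter.Tendsto (fun t => h (max t 0)) Filter.atTop (𝓝 (L ^ (1 / (1 - θ)))) := by
    have hc : ContinuousAt (fun y : ℝ => y ^ (1 / (1 - θ))) L :=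
      Real.continuousAt_rpow_const L _ (Or.inr (by positivity))
    exact (hc.tendsto.comp hgL).congr (fun t => (hinv t).symm)
  set M : ℝ := L ^ (1 / (1 - θ)) with hMdef
  have hM0 : 0 ≤ M := Real.rpow_nonneg hL0 _
  have hMzero : M = 0 := by
    by_contra hMne
    have hMpos : 0 < M := lt_of_le_of_ne hM0 (Ne.symm hMne)
    have hge : ∀ t : ℝ, 0 ≤ t → M ≤ h t := by
      intro t ht
      have h1 : L ^ (1 / (1 - θ)) ≤ g t ^ (1 / (1 - θ)) :=
        Real.rpow_le_rpow hL0 (hLle t) (by positivity)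
      calc M = L ^ (1 / (1 - θ)) := hMdef
        _ ≤ g t ^ (1 / (1 - θ)) := h1
        _ = h (max t 0) := (hinv t).symm
        _ = h t := by rw [max_eq_left ht]
    set c : ℝ := (ν * M ^ θ) ^ 2 with hcdef
    have hcpos : 0 < c := pow_pos (mul_pos hν (Real.rpow_pos_of_pos hMpos θ)) 2
    have hgc : ∀ t : ℝ, 0 ≤ t → c ≤ ‖G (Z t)‖ ^ 2 := by
      intro t ht
      have h1 : ν * M ^ θ ≤ ν * h t ^ θ :=
        mul_le_mul_of_nonneg_left (Real.rpow_le_rpow hM0 (hge t ht) hθ0.le) hν.le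
      have h2 := h1.trans (hloj (Z t))
      have h3 : 0 ≤ ν * M ^ θ := (mul_pos hν (Real.rpow_pos_of_pos hMpos θ)).le
      rw [hcdef]
      exact pow_le_pow_left₀ h3 h2 2
    have h00 : 0 ≤ h 0 := hd0 (Z 0)
    set T : ℝ := (h 0 + 1) / c with hT
    have hTpos : (0:ℝ) ≤ T := div_nonneg (by linarith) hcpos.le
    have ZcOn : ContinuousOn Z (Set.Icc 0 T) :=
      fun s hs => (hZconton s hs.1).continuousWithinAt
    have hGZ2 : ContinuousOn (fun s => -(‖G (Z s)‖ ^ 2)) (Set.Icc 0 T) :=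
      (((hGcont.comp_continuousOn ZcOn).norm.pow 2)).neg
    have hint2 : IntervalIntegrable (fun s => -(‖G (Z s)‖ ^ 2)) MeasureTheory.volume 0 T :=
      (hGZ2.mono (by rw [Set.uIcc_of_le hTpos])).intervalIntegrable
    have hftc2 : ∫ s in (0:ℝ)..T, -(‖G (Z s)‖ ^ 2) = h T - h 0 := by
      apply intervalIntegral.integral_eq_sub_of_hasDerivAt
      · intro s hs; rw [Set.uIcc_of_le hTpos] at hs; exact hh' s hs.1
      · exact hint2
    have hmono2 : ∫ s in (0:ℝ)..T, -(‖G (Z s)‖ ^ 2) ≤ ∫ _s in (0:ℝ)..T, (-c) := by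
      apply intervalIntegral.integral_mono_on hTpos hint2 intervalIntegrable_const
      intro s hs
      have := hgc s hs.1
      linarith
    rw [hftc2, intervalIntegral.integral_const, smul_eq_mul, sub_zero] at hmono2
    have hTc : T * c = h 0 + 1 := by
      rw [hT, div_mul_cancel₀ _ hcpos.ne']
    have hhT : h T ≤ -1 := by nlinarith [hmono2, hTc]
    have := hd0 (Z T)
    simp only [hh] at *
    linarith
  have hh0 : Filter.Tendsto h Filter.atTop (𝓝 0) := by
    have h1 := hM
    rw [hMzero] at h1
    apply h1.congr'
    filter_upwards [Filter.eventually_ge_atTop (0:ℝ)] with t ht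
    rw [max_eq_left ht]
  have hdxb : Filter.Tendsto (fun t => d (Z t)) Filter.atTop (𝓝 (d xbar)) :=
    (hd.continuous.tendsto xbar).comp hZbar
  have hdxbar : d xbar = 0 := tendsto_nhds_unique hdxb hh0
  exact ⟨part1, part2, xbar, hdxbar, hZbar⟩
end

section
/- (Trajectory from the origin with non-bisector constant control enters the dominant branch) Let d(x) = x₁²x₂² and θ with cos θ > sin θ > 0. For ε > 0, let X^ε solve Ẋ = (cos θ, sin θ) − (1/ε)∇d(X) with X^ε(0) = (0,0). Then for all t ≥ 0: X₁^ε(t) ≥ 0, X₂^ε(t) ≥ 0, and X₁^ε(t) − X₂^ε(t) ≥ (cos θ − sin θ)·t. -/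
open Set MeasureTheory

/-- Integrating factor lemma: if `f 0 = 0`, `g` is continuous on `[0,∞)`, and at each
`t ≥ 0` the function `f` has a derivative `f'` with `f' + g t * f t ≥ 0`, then `f ≥ 0`
on `[0,∞)`. -/
lemma aux_nonneg (f g : ℝ → ℝ) (hf0 : f 0 = 0)
    (hg : ∀ t, 0 ≤ t → ContinuousAt g t)
    (hf : ∀ t, 0 ≤ t → ∃ f', HasDerivAt f f' t ∧ 0 ≤ f' + g t * f t) :
    ∀ t, 0 ≤ t → 0 ≤ f t := by
  intro T hT
  rcases eq_or_lt_of_le hT with h | h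
  · rw [← h, hf0]
  set G : ℝ → ℝ := fun t => ∫ x in (0:ℝ)..t, g x with hG
  set F : ℝ → ℝ := fun t => f t * Real.exp (G t) with hF
  have hgc : ContinuousOn g (Icc 0 T) := fun s hs => (hg s hs.1).continuousWithinAt
  have hgc' : ContinuousOn g (Ioi (0:ℝ)) := fun s hs =>
    (hg s (le_of_lt hs)).continuousWithinAt
  have hGcont : ContinuousOn G (Icc 0 T) := by
    have hint : IntegrableOn g (uIcc 0 T) := by
      rw [uIcc_of_le hT]; exact hgc.integrableOn_Icc
    have := intervalIntegral.continuousOn_primitive_interval hint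
    rwa [uIcc_of_le hT] at this
  have hGd : ∀ s ∈ Ioo (0:ℝ) T, HasDerivAt G (g s) s := by
    intro s hs
    apply intervalIntegral.integral_hasDerivAt_right
    · apply ContinuousOn.intervalIntegrable
      intro x hx
      rw [uIcc_of_le hs.1.le] at hx
      exact (hg x hx.1).continuousWithinAt
    · exact hgc'.stronglyMeasurableAtFilter isOpen_Ioi s hs.1
    · exact hg s hs.1.le
  have hfc : ContinuousOn f (Icc 0 T) := fun s hs => by
    obtain ⟨f', hf', _⟩ := hf s hs.1
    exact hf'.continuousAt.continuousWithinAt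
  have hFcont : ContinuousOn F (Icc 0 T) := hfc.mul (Real.continuous_exp.comp_continuousOn hGcont)
  have hFd : ∀ s ∈ Ioo (0:ℝ) T, ∃ F', HasDerivAt F F' s ∧ 0 ≤ F' := by
    intro s hs
    obtain ⟨f', hf', hineq⟩ := hf s hs.1.le
    have hE : HasDerivAt (fun t => Real.exp (G t)) (Real.exp (G s) * g s) s :=
      (hGd s hs).exp
    refine ⟨f' * Real.exp (G s) + f s * (Real.exp (G s) * g s), hf'.mul hE, ?_⟩
    have : f' * Real.exp (G s) + f s * (Real.exp (G s) * g s)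
        = (f' + g s * f s) * Real.exp (G s) := by ring
    rw [this]
    exact mul_nonneg hineq (Real.exp_pos _).le
  have hmono : MonotoneOn F (Icc 0 T) := by
    apply monotoneOn_of_deriv_nonneg (convex_Icc 0 T) hFcont
    · intro s hs
      rw [interior_Icc] at hs
      obtain ⟨F', hF', _⟩ := hFd s hs
      exact hF'.differentiableAt.differentiableWithinAt
    · intro s hs
      rw [interior_Icc] at hs
      obtain ⟨F', hF', hF'nn⟩ := hFd s hs
      rw [hF'.deriv]
      exact hF'nn
  have key : F 0 ≤ F T := hmono ⟨le_refl 0, hT⟩ ⟨hT, le_refl T⟩ hT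
  have hF0 : F 0 = 0 := by simp [hF, hf0]
  rw [hF0] at key
  have key' : 0 ≤ f T * Real.exp (G T) := key
  nlinarith [Real.exp_pos (G T), key']

/-- Trajectory from the origin with constant non-bisector control: componentwise
    nonnegativity and linear separation X₁ − X₂ ≥ (cos θ − sin θ) t. -/
theorem origin_nonbisector_branch (θ ε : ℝ)
    (hθ : Real.sin θ < Real.cos θ) (hθ' : 0 < Real.sin θ) (hε : 0 < ε)
    (X₁ X₂ : ℝ → ℝ)
    (hX₁ : ∀ t, 0 ≤ t →
      HasDerivAt X₁ (Real.cos θ - (1 / ε) * (2 * X₁ t * (X₂ t) ^ 2)) t)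
    (hX₂ : ∀ t, 0 ≤ t →
      HasDerivAt X₂ (Real.sin θ - (1 / ε) * (2 * (X₁ t) ^ 2 * X₂ t)) t)
    (h0 : X₁ 0 = 0 ∧ X₂ 0 = 0) :
    ∀ t, 0 ≤ t →
      0 ≤ X₁ t ∧ 0 ≤ X₂ t ∧ (Real.cos θ - Real.sin θ) * t ≤ X₁ t - X₂ t := by
  obtain ⟨h01, h02⟩ := h0
  have hcos : 0 < Real.cos θ := lt_trans hθ' hθ
  have hX₁cont : ∀ t, 0 ≤ t → ContinuousAt X₁ t := fun t ht => (hX₁ t ht).continuousAt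
  have hX₂cont : ∀ t, 0 ≤ t → ContinuousAt X₂ t := fun t ht => (hX₂ t ht).continuousAt
  -- Part 1: X₁ ≥ 0
  have hP1 : ∀ t, 0 ≤ t → 0 ≤ X₁ t := by
    apply aux_nonneg X₁ (fun t => (1 / ε) * (2 * (X₂ t) ^ 2)) h01
    · intro t ht
      exact (continuousAt_const.mul ((continuousAt_const.mul
        ((hX₂cont t ht).pow 2))))
    · intro t ht
      refine ⟨_, hX₁ t ht, ?_⟩
      have : Real.cos θ - 1 / ε * (2 * X₁ t * X₂ t ^ 2)
          + 1 / ε * (2 * X₂ t ^ 2) * X₁ t = Real.cos θ := by ring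
      rw [this]
      exact hcos.le
  -- Part 2: X₂ ≥ 0
  have hP2 : ∀ t, 0 ≤ t → 0 ≤ X₂ t := by
    apply aux_nonneg X₂ (fun t => (1 / ε) * (2 * (X₁ t) ^ 2)) h02
    · intro t ht
      exact (continuousAt_const.mul ((continuousAt_const.mul
        ((hX₁cont t ht).pow 2))))
    · intro t ht
      refine ⟨_, hX₂ t ht, ?_⟩
      have : Real.sin θ - 1 / ε * (2 * X₁ t ^ 2 * X₂ t)
          + 1 / ε * (2 * X₁ t ^ 2) * X₂ t = Real.sin θ := by ring
      rw [this]
      exact hθ'.le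
  -- Part 3: X₁ - X₂ - (cos θ - sin θ) t ≥ 0
  have hP3 : ∀ t, 0 ≤ t →
      0 ≤ X₁ t - X₂ t - (Real.cos θ - Real.sin θ) * t := by
    apply aux_nonneg (fun t => X₁ t - X₂ t - (Real.cos θ - Real.sin θ) * t)
      (fun t => -((1 / ε) * (2 * X₁ t * X₂ t)))
    · simp [h01, h02]
    · intro t ht
      exact (continuousAt_const.mul
        ((continuousAt_const.mul (hX₁cont t ht)).mul (hX₂cont t ht))).neg
    · intro t ht
      have hd : HasDerivAt (fun t => X₁ t - X₂ t - (Real.cos θ - Real.sin θ) * t)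
          ((Real.cos θ - 1 / ε * (2 * X₁ t * X₂ t ^ 2))
            - (Real.sin θ - 1 / ε * (2 * X₁ t ^ 2 * X₂ t))
            - (Real.cos θ - Real.sin θ)) t := by
        have hlin : HasDerivAt (fun t : ℝ => (Real.cos θ - Real.sin θ) * t)
            (Real.cos θ - Real.sin θ) t := by
          simpa using (hasDerivAt_id t).const_mul (Real.cos θ - Real.sin θ)
        exact ((hX₁ t ht).sub (hX₂ t ht)).sub hlin
      refine ⟨_, hd, ?_⟩
      have h1 := hP1 t ht
      have h2 := hP2 t ht
      have hc : 0 ≤ Real.cos θ - Real.sin θ := by linarith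
      have hε' : 0 ≤ 1 / ε := by positivity
      have : (Real.cos θ - 1 / ε * (2 * X₁ t * X₂ t ^ 2))
            - (Real.sin θ - 1 / ε * (2 * X₁ t ^ 2 * X₂ t))
            - (Real.cos θ - Real.sin θ)
          + -(1 / ε * (2 * X₁ t * X₂ t))
            * (X₁ t - X₂ t - (Real.cos θ - Real.sin θ) * t)
          = 1 / ε * (2 * X₁ t * X₂ t) * ((Real.cos θ - Real.sin θ) * t) := by
        ring
      rw [this]
      have : 0 ≤ X₁ t * X₂ t := mul_nonneg h1 h2
      positivity
  intro t ht
  refine ⟨hP1 t ht, hP2 t ht, by linarith [hP3 t ht]⟩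
end
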